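/- Let A be any collection of permutations from S_n. If A is not compressed, then A can be transformed into a compressed family by the application of a finite number of compression operations; that is, there is a finite sequence of (i,j)-compressions (for various pairs i < j) whose successive application to A yields a compressed family. -/

import Mathlib

open Equiv Finset
open scoped Classical

noncomputable section

/-- A common cycle of two permutations `σ` and `π`: a nonempty subset `B` invariant
under both, on which they agree, and on which `σ` acts as a single cycle. -/
def IsCommonCycle {n : ℕ} (σ π : Equiv.Perm (Fin n)) (B : Finset (Fin n)) : Prop :=
  B.Nonempty ∧ (∀ x ∈ B, σ x ∈ B) ∧ (∀ x ∈ B, π x ∈ B) ∧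
  (∀ x ∈ B, σ x = π x) ∧ (∀ x ∈ B, ∀ y ∈ B, σ.SameCycle x y)

/-- A family of permutations is `t`-cycle-intersecting if any two of its members
have at least `t` common cycles on pairwise disjoint subsets. -/
def TCycleIntersecting {n : ℕ} (t : ℕ) (F : Set (Equiv.Perm (Fin n))) : Prop :=
  ∀ σ ∈ F, ∀ π ∈ F, ∃ 𝒞 : Finset (Finset (Fin n)),
    t ≤ 𝒞.card ∧ (∀ B ∈ 𝒞, IsCommonCycle σ π B) ∧
    (𝒞 : Set (Finset (Fin n))).Pairwise fun A B => Disjoint A B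

/-- The `ij`-fixing of a permutation: if `σ i = j` then make `i` a fixed point and
send `σ⁻¹ i` to `j`, leaving everything else unchanged. -/
def ijFix {n : ℕ} (i j : Fin n) (σ : Equiv.Perm (Fin n)) : Equiv.Perm (Fin n) :=
  if σ i = j then σ * Equiv.swap i (σ⁻¹ i) else σ

/-- The `ij`-fixing operation on a family of permutations. -/
def fixFamOp {n : ℕ} (i j : Fin n) (A : Set (Equiv.Perm (Fin n))) :
    Set (Equiv.Perm (Fin n)) :=
  (fun σ => if ijFix i j σ ∈ A then σ else ijFix i j σ) '' A

/-- A family is fixed if it is closed under all `ij`-fixing operations. -/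
def IsFixedFam {n : ℕ} (A : Set (Equiv.Perm (Fin n))) : Prop :=
  ∀ i j : Fin n, i ≠ j → fixFamOp i j A = A

/-- The `(i,j)`-compression of a permutation: if `σ i ≠ i` and `σ j = j`, then
fix `i`, send `j` to `σ i` and `σ⁻¹ i` to `j`; otherwise leave `σ` unchanged. -/
def compPerm {n : ℕ} (i j : Fin n) (σ : Equiv.Perm (Fin n)) : Equiv.Perm (Fin n) :=
  if σ i ≠ i ∧ σ j = j then (Equiv.swap i (σ i) * Equiv.swap i j) * σ else σ

/-- The `(i,j)`-compression operation on a family of permutations. -/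
def compFam {n : ℕ} (i j : Fin n) (A : Set (Equiv.Perm (Fin n))) :
    Set (Equiv.Perm (Fin n)) :=
  (fun σ => if compPerm i j σ ∈ A then σ else compPerm i j σ) '' A

/-- A family is compressed if it is closed under all `(i,j)`-compressions. -/
def IsCompressedFam {n : ℕ} (A : Set (Equiv.Perm (Fin n))) : Prop :=
  ∀ i j : Fin n, i < j → compFam i j A = A

/-- `F` is the stabilizer of `t` points: there are `t` distinct points such that `F`
consists exactly of the permutations fixing all of them. -/
def IsTPointStabilizer {n : ℕ} (t : ℕ) (F : Set (Equiv.Perm (Fin n))) : Prop :=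
  ∃ a : Fin t ↪ Fin n, F = {σ | ∀ k, σ (a k) = a k}

/-- The set of fixed points of a permutation. -/
def fixSet {n : ℕ} (σ : Equiv.Perm (Fin n)) : Finset (Fin n) :=
  Finset.univ.filter fun x => σ x = x

/-- The up-permutation of a set `B`: all permutations fixing every element of `B`. -/
def UpSet {n : ℕ} (B : Finset (Fin n)) : Set (Equiv.Perm (Fin n)) :=
  {σ | ∀ x ∈ B, σ x = x}

/-- The up-permutation of a collection of sets. -/
def UpFam {n : ℕ} (g : Set (Finset (Fin n))) : Set (Equiv.Perm (Fin n)) :=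
  ⋃ B ∈ g, UpSet B

/-- `g` is a generating set for `F`: it contains no set of size `n-1` and
`Up(g) = F`. -/
def IsGenSet {n : ℕ} (g : Set (Finset (Fin n))) (F : Set (Equiv.Perm (Fin n))) : Prop :=
  (∀ B ∈ g, B.card ≠ n - 1) ∧ UpFam g = F

/-- `s⁺(B)`: the largest element of `B`, in the 1-based numbering of `[n] = {1,…,n}`
(so `s⁺(∅) = 0`). -/
def sPlus {n : ℕ} (B : Finset (Fin n)) : ℕ := B.sup fun x => (x : ℕ) + 1

/-- `s⁺(g) = max {s⁺(B) : B ∈ g}`. -/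
def sPlusFam {n : ℕ} (g : Set (Finset (Fin n))) : ℕ := sSup (sPlus '' g)

/-- `s_min(G(F)) = min {s⁺(g) : g a generating set of F}`. -/
def sMin {n : ℕ} (F : Set (Equiv.Perm (Fin n))) : ℕ :=
  sInf (sPlusFam '' {g | IsGenSet g F})

/-- `L(B)`: all sets obtained from `B` by left-shifting, i.e. sets of the same size
whose `i`-th smallest element is at most the `i`-th smallest element of `B`. -/
def LSet {n : ℕ} (B : Finset (Fin n)) : Set (Finset (Fin n)) :=
  {A | ∃ h : A.card = B.card, ∀ i : Fin B.card,
      A.orderEmbOfFin h i ≤ B.orderEmbOfFin rfl i}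

/-- `L(g) = ⋃_{B ∈ g} L(B)`. -/
def LFam {n : ℕ} (g : Set (Finset (Fin n))) : Set (Finset (Fin n)) :=
  ⋃ B ∈ g, LSet B

/-- `L_*(g)`: the minimal (under inclusion) elements of `L(g)`. -/
def Lstar {n : ℕ} (g : Set (Finset (Fin n))) : Set (Finset (Fin n)) :=
  {A | A ∈ LFam g ∧ ∀ A' ∈ LFam g, A' ⊆ A → A' = A}

/-- The interval `[m] = {1,…,m}` inside `Fin n` (1-based). -/
def Ival (n m : ℕ) : Finset (Fin n) := Finset.univ.filter fun x => (x : ℕ) < m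

/-- `D(E) = {σ : fix(σ) ∩ [s⁺(E)] = E}`. -/
def DSet {n : ℕ} (E : Finset (Fin n)) : Set (Equiv.Perm (Fin n)) :=
  {σ | fixSet σ ∩ Ival n (sPlus E) = E}

lemma compPerm_eq {n : ℕ} {i j : Fin n} {σ : Equiv.Perm (Fin n)}
    (h : σ i ≠ i ∧ σ j = j) :
    compPerm i j σ = (Equiv.swap i (σ i) * Equiv.swap i j) * σ := if_pos h

lemma fixSet_compPerm {n : ℕ} {i j : Fin n} (hij : i ≠ j) {σ : Equiv.Perm (Fin n)}
    (h : σ i ≠ i ∧ σ j = j) :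
    fixSet (compPerm i j σ) = insert i ((fixSet σ).erase j) := by
  have hσij : σ i ≠ j := fun e => hij (σ.injective (e.trans h.2.symm))
  ext x
  simp only [fixSet, mem_insert, mem_erase, mem_filter, mem_univ, true_and,
    compPerm_eq h, Equiv.Perm.mul_apply]
  by_cases hxi : x = i
  · subst hxi
    simp [Equiv.swap_apply_of_ne_of_ne h.1 hσij]
  by_cases hxj : x = j
  · subst hxj
    simp [h.2, Equiv.swap_apply_right, hxi, Ne.symm hσij, hσij]
  by_cases hxs : σ x = i
  · have : Equiv.swap i (σ i) (Equiv.swap i j (σ x)) = j := by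
      rw [hxs, Equiv.swap_apply_left,
        Equiv.swap_apply_of_ne_of_ne (Ne.symm hij) (Ne.symm hσij)]
    rw [this]
    constructor
    · intro hjx; exact absurd hjx.symm hxj
    · rintro (rfl | ⟨-, hfix⟩)
      · exact absurd rfl hxi
      · exact absurd (hxs ▸ hfix.symm) hxi
  · have hsj : σ x ≠ j := fun e => hxj (σ.injective (e.trans h.2.symm))
    have hsi : σ x ≠ σ i := fun e => hxi (σ.injective e)
    rw [Equiv.swap_apply_of_ne_of_ne hxs hsj, Equiv.swap_apply_of_ne_of_ne hxs hsi]
    simp [hxi, hxj]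

/-- Weight of a permutation: sum of (1-based) values of its fixed points. -/
def permWt {n : ℕ} (σ : Equiv.Perm (Fin n)) : ℕ := ∑ x ∈ fixSet σ, ((x : ℕ) + 1)

/-- Weight of a family. -/
def famWt {n : ℕ} (A : Set (Equiv.Perm (Fin n))) : ℕ :=
  ∑ σ ∈ (Set.toFinite A).toFinset, permWt σ

lemma permWt_compPerm_lt {n : ℕ} {i j : Fin n} (hij : i < j) {σ : Equiv.Perm (Fin n)}
    (h : σ i ≠ i ∧ σ j = j) : permWt (compPerm i j σ) < permWt σ := by
  have hij' : i ≠ j := Fin.ne_of_lt hij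
  have hi : i ∉ (fixSet σ).erase j := by
    simp only [mem_erase, fixSet, mem_filter, mem_univ, true_and]
    exact fun hc => h.1 hc.2
  have hj : j ∈ fixSet σ := by simp [fixSet, h.2]
  have e1 : permWt (compPerm i j σ) =
      ((i : ℕ) + 1) + ∑ x ∈ (fixSet σ).erase j, ((x : ℕ) + 1) := by
    rw [permWt, fixSet_compPerm hij' h, Finset.sum_insert hi]
  have e2 : (∑ x ∈ (fixSet σ).erase j, ((x : ℕ) + 1)) + ((j : ℕ) + 1) = permWt σ :=
    Finset.sum_erase_add _ _ hj
  have : (i : ℕ) < (j : ℕ) := hij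
  omega

lemma compPerm_apply_j {n : ℕ} {i j : Fin n} (hij : i ≠ j) {σ : Equiv.Perm (Fin n)}
    (h : σ i ≠ i ∧ σ j = j) : compPerm i j σ j = σ i := by
  have hσij : σ i ≠ j := fun e => hij (σ.injective (e.trans h.2.symm))
  rw [compPerm_eq h, Equiv.Perm.mul_apply, Equiv.Perm.mul_apply, h.2,
    Equiv.swap_apply_right, Equiv.swap_apply_left]

lemma comp_injOn {n : ℕ} {i j : Fin n} (hij : i ≠ j) (A : Set (Equiv.Perm (Fin n))) :
    Set.InjOn (fun σ => if compPerm i j σ ∈ A then σ else compPerm i j σ) A := by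
  intro σ hσ π hπ hEq
  simp only at hEq
  by_cases h1 : compPerm i j σ ∈ A <;> by_cases h2 : compPerm i j π ∈ A <;>
    simp only [h1, h2, if_true, if_false] at hEq
  · exact hEq
  · exact absurd (hEq ▸ hσ) h2
  · exact absurd (hEq ▸ hπ) h1
  · by_cases hc1 : σ i ≠ i ∧ σ j = j
    · by_cases hc2 : π i ≠ i ∧ π j = j
      · have hval : σ i = π i := by
          rw [← compPerm_apply_j hij hc1, ← compPerm_apply_j hij hc2, hEq]
        rw [compPerm_eq hc1, compPerm_eq hc2, hval] at hEq
        exact mul_left_cancel hEq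
      · rw [compPerm, if_neg hc2] at h2; exact absurd hπ h2
    · rw [compPerm, if_neg hc1] at h1; exact absurd hσ h1

lemma famWt_compFam_lt {n : ℕ} {i j : Fin n} (hij : i < j)
    {A : Set (Equiv.Perm (Fin n))} (hne : compFam i j A ≠ A) :
    famWt (compFam i j A) < famWt A := by
  have hij' : i ≠ j := Fin.ne_of_lt hij
  set C : Equiv.Perm (Fin n) → Equiv.Perm (Fin n) :=
    fun σ => if compPerm i j σ ∈ A then σ else compPerm i j σ with hC
  have himg : (Set.toFinite (compFam i j A)).toFinset =
      ((Set.toFinite A).toFinset).image C := by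
    ext τ
    simp [compFam, Set.Finite.mem_toFinset, hC]
  have hCle : ∀ σ ∈ A, permWt (C σ) ≤ permWt σ := by
    intro σ hσ
    by_cases h1 : compPerm i j σ ∈ A
    · simp [hC, h1]
    · by_cases hc : σ i ≠ i ∧ σ j = j
      · simp only [hC, h1, if_false]
        exact le_of_lt (permWt_compPerm_lt hij hc)
      · simp [hC, h1, compPerm, hc]
  have hex : ∃ σ ∈ A, C σ ≠ σ := by
    by_contra hcon
    push_neg at hcon
    apply hne
    have h' := Set.image_congr (g := id) fun σ hσ => hcon σ hσ
    exact (by simpa using h' : C '' A = A)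
  obtain ⟨σ₀, hσ₀, hCσ₀⟩ := hex
  have h1 : compPerm i j σ₀ ∉ A := by
    intro hc; exact hCσ₀ (by simp [hC, hc])
  have hc0 : σ₀ i ≠ i ∧ σ₀ j = j := by
    by_contra hc
    rw [compPerm, if_neg hc] at h1
    exact h1 hσ₀
  have hlt : permWt (C σ₀) < permWt σ₀ := by
    simp only [hC, h1, if_false]
    exact permWt_compPerm_lt hij hc0
  calc famWt (compFam i j A)
      = ∑ τ ∈ ((Set.toFinite A).toFinset).image C, permWt τ := by rw [famWt, himg]
    _ = ∑ σ ∈ (Set.toFinite A).toFinset, permWt (C σ) :=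
        Finset.sum_image fun x hx y hy =>
          comp_injOn hij' A ((Set.Finite.mem_toFinset _).mp hx)
            ((Set.Finite.mem_toFinset _).mp hy)
    _ < ∑ σ ∈ (Set.toFinite A).toFinset, permWt σ := by
        apply Finset.sum_lt_sum
        · intro σ hσ; exact hCle σ ((Set.Finite.mem_toFinset _).mp hσ)
        · exact ⟨σ₀, (Set.Finite.mem_toFinset _).mpr hσ₀, hlt⟩

lemma stmt4_aux {n : ℕ} : ∀ m (A : Set (Equiv.Perm (Fin n))), famWt A ≤ m →
    ∃ L : List (Fin n × Fin n), (∀ p ∈ L, p.1 < p.2) ∧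
      IsCompressedFam (L.foldl (fun B p => compFam p.1 p.2 B) A) := by
  intro m
  induction m with
  | zero =>
    intro A hA
    by_cases hc : IsCompressedFam A
    · exact ⟨[], by simp, hc⟩
    · simp only [IsCompressedFam, not_forall] at hc
      obtain ⟨i, j, hij, hne⟩ := hc
      have := famWt_compFam_lt hij hne
      omega
  | succ m ih =>
    intro A hA
    by_cases hc : IsCompressedFam A
    · exact ⟨[], by simp, hc⟩
    · simp only [IsCompressedFam, not_forall] at hc
      obtain ⟨i, j, hij, hne⟩ := hc
      have hlt := famWt_compFam_lt hij hne
      obtain ⟨L, hL1, hL2⟩ := ih (compFam i j A) (by omega)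
      refine ⟨(i, j) :: L, ?_, ?_⟩
      · intro p hp
        rcases List.mem_cons.mp hp with rfl | hp'
        · exact hij
        · exact hL1 p hp'
      · simpa using hL2

/-- Any non-compressed family of permutations can be transformed into a compressed
family by finitely many compression operations. -/
theorem stmt4 {n : ℕ} (A : Set (Equiv.Perm (Fin n))) (h : ¬ IsCompressedFam A) :
    ∃ L : List (Fin n × Fin n), (∀ p ∈ L, p.1 < p.2) ∧
      IsCompressedFam (L.foldl (fun B p => compFam p.1 p.2 B) A) :=
  stmt4_aux (famWt A) A le_rfl
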